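/- Let H be the graph with vertex set ℕ₀ × ℕ₀ in which (v₁, v₂) and (w₁, w₂) are adjacent if and only if |v₁ − w₁| + |v₂ − w₂| = 1. Suppose F is a finite induced subgraph of H such that whenever (x, y) ∈ V(F): if x ≥ 1 then (x−1, y) ∈ V(F), and if y ≥ 1 then (x, y−1) ∈ V(F). Then at least one of the sets O := {(x, y) ∈ V(F) : x + y is odd} and E := {(x, y) ∈ V(F) : x + y is even} is a maximum independent set in F. -/

import Mathlib

def gridGraph : SimpleGraph (ℕ × ℕ) where
  Adj v w := |(v.1 : ℤ) - w.1| + |(v.2 : ℤ) - w.2| = 1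
  symm := by
    refine ⟨?_⟩
    intro v w h
    simpa [abs_sub_comm] using h
  loopless := by
    refine ⟨?_⟩
    intro v h
    simp at h

def GridIndep (I : Finset (ℕ × ℕ)) : Prop :=
  ∀ v ∈ I, ∀ w ∈ I, ¬ gridGraph.Adj v w

-- basic adjacency facts
lemma adj_iff {v w : ℕ × ℕ} :
    gridGraph.Adj v w ↔ ((v.1:ℤ) - w.1).natAbs + ((v.2:ℤ) - w.2).natAbs = 1 := by
  constructor
  · intro h
    have h' : |(v.1 : ℤ) - w.1| + |(v.2 : ℤ) - w.2| = 1 := h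
    rw [Int.abs_eq_natAbs, Int.abs_eq_natAbs] at h'
    exact_mod_cast h'
  · intro h
    show |(v.1 : ℤ) - w.1| + |(v.2 : ℤ) - w.2| = 1
    rw [Int.abs_eq_natAbs, Int.abs_eq_natAbs]
    exact_mod_cast h

lemma adj_horiz (x y : ℕ) : gridGraph.Adj (x, y) (x + 1, y) := by
  rw [adj_iff]; simp

lemma adj_vert (x y : ℕ) : gridGraph.Adj (x, y) (x, y + 1) := by
  rw [adj_iff]; simp

lemma adj_parity {v w : ℕ × ℕ} (h : gridGraph.Adj v w) :
    (v.1 + v.2) % 2 ≠ (w.1 + w.2) % 2 := by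
  rw [adj_iff] at h
  omega

def Young (F : Finset (ℕ × ℕ)) : Prop :=
  ∀ x y : ℕ, (x, y) ∈ F → (1 ≤ x → (x - 1, y) ∈ F) ∧ (1 ≤ y → (x, y - 1) ∈ F)

def shf (F : Finset (ℕ × ℕ)) : Finset (ℕ × ℕ) :=
  (F.filter (fun v => 1 ≤ v.1)).image (fun v => (v.1 - 1, v.2))

lemma mem_shf {F : Finset (ℕ × ℕ)} {w : ℕ × ℕ} : w ∈ shf F ↔ (w.1 + 1, w.2) ∈ F := by
  unfold shf
  simp only [Finset.mem_image, Finset.mem_filter]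
  constructor
  · rintro ⟨v, ⟨hvF, hv1⟩, rfl⟩
    simpa [Nat.sub_add_cancel hv1] using hvF
  · intro h
    exact ⟨(w.1 + 1, w.2), ⟨h, by omega⟩, by simp⟩

lemma young_shf {F : Finset (ℕ × ℕ)} (hY : Young F) : Young (shf F) := by
  intro x y hxy
  constructor
  · intro hx
    rw [mem_shf] at hxy ⊢
    have := (hY (x + 1) y hxy).1 (by omega)
    simpa [show x - 1 + 1 = x + 1 - 1 by omega] using this
  · intro hy
    rw [mem_shf] at hxy ⊢
    exact (hY (x + 1) y hxy).2 hy

lemma shf_subset {F G : Finset (ℕ × ℕ)} (h : F ⊆ G) : shf F ⊆ shf G := by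
  intro w hw
  rw [mem_shf] at hw ⊢
  exact h hw

lemma indep_shf {J : Finset (ℕ × ℕ)} (hI : GridIndep J) : GridIndep (shf J) := by
  intro v hv w hw hadj
  rw [mem_shf] at hv hw
  apply hI _ hv _ hw
  rw [adj_iff] at hadj ⊢
  simp only [Prod.fst, Prod.snd] at *
  omega

lemma card_shf (F : Finset (ℕ × ℕ)) : (shf F).card = (F.filter (fun v => 1 ≤ v.1)).card := by
  unfold shf
  apply Finset.card_image_of_injOn
  intro v hv w hw he
  simp only [Finset.coe_filter, Set.mem_setOf_eq] at hv hw
  have h1 := congrArg Prod.fst he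
  have h2 := congrArg Prod.snd he
  simp only at h1 h2
  ext
  · omega
  · exact h2

abbrev Oc (F : Finset (ℕ × ℕ)) : ℕ := (F.filter (fun v => Odd (v.1 + v.2))).card
abbrev Ec (F : Finset (ℕ × ℕ)) : ℕ := (F.filter (fun v => Even (v.1 + v.2))).card
abbrev eC (F : Finset (ℕ × ℕ)) : ℕ := (F.filter (fun v => v.1 = 0 ∧ Even v.2)).card
abbrev oC (F : Finset (ℕ × ℕ)) : ℕ := (F.filter (fun v => v.1 = 0 ∧ Odd v.2)).card

lemma split_card (F : Finset (ℕ × ℕ)) :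
    F.card = (F.filter (fun v => v.1 = 0)).card + (shf F).card := by
  rw [card_shf]
  rw [← Finset.card_filter_add_card_filter_not (s := F) (p := fun v => v.1 = 0)]
  have h : F.filter (fun a => ¬a.1 = 0) = F.filter (fun v => 1 ≤ v.1) :=
    Finset.filter_congr (fun v _ => by omega)
  rw [h]

lemma row0_parity_split (J : Finset (ℕ × ℕ)) :
    (J.filter (fun v => v.1 = 0)).card = eC J + oC J := by
  rw [← Finset.card_filter_add_card_filter_not (s := J.filter (fun v => v.1 = 0))
      (p := fun v => Even v.2)]
  rw [Finset.filter_filter, Finset.filter_filter]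
  congr 2
  apply Finset.filter_congr
  intro v _
  simp [Nat.not_even_iff_odd]

lemma shift_parity_card (F : Finset (ℕ × ℕ)) :
    (F.filter (fun v => Even (v.1 + v.2) ∧ 1 ≤ v.1)).card
      = ((shf F).filter (fun v => Odd (v.1 + v.2))).card := by
  apply Finset.card_bij' (i := fun v _ => (v.1 - 1, v.2)) (j := fun w _ => (w.1 + 1, w.2))
  · intro v hv
    simp only [Finset.mem_filter] at hv
    exact Prod.ext_iff.mpr ⟨by simp; omega, rfl⟩
  · intro w _
    exact Prod.ext_iff.mpr ⟨by simp, rfl⟩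
  · intro v hv
    simp only [Finset.mem_filter] at hv ⊢
    obtain ⟨hvF, he, h1⟩ := hv
    constructor
    · rw [mem_shf]
      have h2 : (v.1 - 1 + 1, v.2) = v := Prod.ext_iff.mpr ⟨by simp; omega, rfl⟩
      rwa [h2]
    · show Odd (v.1 - 1 + v.2)
      rw [Nat.odd_iff]
      rw [Nat.even_iff] at he
      omega
  · intro w hw
    simp only [Finset.mem_filter, mem_shf] at hw ⊢
    obtain ⟨hwF, ho⟩ := hw
    refine ⟨hwF, ?_, by omega⟩
    show Even (w.1 + 1 + w.2)
    rw [Nat.even_iff]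
    rw [Nat.odd_iff] at ho
    omega

lemma shift_parity_card' (F : Finset (ℕ × ℕ)) :
    (F.filter (fun v => Odd (v.1 + v.2) ∧ 1 ≤ v.1)).card
      = ((shf F).filter (fun v => Even (v.1 + v.2))).card := by
  apply Finset.card_bij' (i := fun v _ => (v.1 - 1, v.2)) (j := fun w _ => (w.1 + 1, w.2))
  · intro v hv
    simp only [Finset.mem_filter] at hv
    exact Prod.ext_iff.mpr ⟨by simp; omega, rfl⟩
  · intro w _
    exact Prod.ext_iff.mpr ⟨by simp, rfl⟩
  · intro v hv
    simp only [Finset.mem_filter] at hv ⊢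
    obtain ⟨hvF, he, h1⟩ := hv
    constructor
    · rw [mem_shf]
      have h2 : (v.1 - 1 + 1, v.2) = v := Prod.ext_iff.mpr ⟨by simp; omega, rfl⟩
      rwa [h2]
    · show Even (v.1 - 1 + v.2)
      rw [Nat.even_iff]
      rw [Nat.odd_iff] at he
      omega
  · intro w hw
    simp only [Finset.mem_filter, mem_shf] at hw ⊢
    obtain ⟨hwF, ho⟩ := hw
    refine ⟨hwF, ?_, by omega⟩
    show Odd (w.1 + 1 + w.2)
    rw [Nat.odd_iff]
    rw [Nat.even_iff] at ho
    omega

lemma ec_identity (F : Finset (ℕ × ℕ)) : Ec F = eC F + Oc (shf F) := by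
  have h0 := Finset.card_filter_add_card_filter_not
    (s := F.filter (fun v => Even (v.1 + v.2))) (p := fun v => v.1 = 0)
  rw [Finset.filter_filter, Finset.filter_filter] at h0
  have h1 : F.filter (fun v => Even (v.1 + v.2) ∧ v.1 = 0)
      = F.filter (fun v => v.1 = 0 ∧ Even v.2) := by
    apply Finset.filter_congr
    intro v _
    constructor
    · rintro ⟨he, h0'⟩
      exact ⟨h0', by rw [Nat.even_iff] at he ⊢; omega⟩
    · rintro ⟨h0', he⟩
      exact ⟨by rw [Nat.even_iff] at he ⊢; omega, h0'⟩
  have h2 : F.filter (fun v => Even (v.1 + v.2) ∧ ¬v.1 = 0)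
      = F.filter (fun v => Even (v.1 + v.2) ∧ 1 ≤ v.1) := by
    apply Finset.filter_congr
    intro v _
    constructor
    · rintro ⟨he, h⟩; exact ⟨he, by omega⟩
    · rintro ⟨he, h⟩; exact ⟨he, by omega⟩
  rw [h1, h2, shift_parity_card] at h0
  exact h0.symm

lemma oc_identity (F : Finset (ℕ × ℕ)) : Oc F = oC F + Ec (shf F) := by
  have h0 := Finset.card_filter_add_card_filter_not
    (s := F.filter (fun v => Odd (v.1 + v.2))) (p := fun v => v.1 = 0)
  rw [Finset.filter_filter, Finset.filter_filter] at h0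
  have h1 : F.filter (fun v => Odd (v.1 + v.2) ∧ v.1 = 0)
      = F.filter (fun v => v.1 = 0 ∧ Odd v.2) := by
    apply Finset.filter_congr
    intro v _
    constructor
    · rintro ⟨he, h0'⟩
      exact ⟨h0', by rw [Nat.odd_iff] at he ⊢; omega⟩
    · rintro ⟨h0', he⟩
      exact ⟨by rw [Nat.odd_iff] at he ⊢; omega, h0'⟩
  have h2 : F.filter (fun v => Odd (v.1 + v.2) ∧ ¬v.1 = 0)
      = F.filter (fun v => Odd (v.1 + v.2) ∧ 1 ≤ v.1) := by
    apply Finset.filter_congr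
    intro v _
    constructor
    · rintro ⟨he, h⟩; exact ⟨he, by omega⟩
    · rintro ⟨he, h⟩; exact ⟨he, by omega⟩
  rw [h1, h2, shift_parity_card'] at h0
  exact h0.symm

lemma shf_row0_card (p : ℕ → Prop) [DecidablePred p] (J : Finset (ℕ × ℕ)) :
    ((shf J).filter (fun v => v.1 = 0 ∧ p v.2)).card
      = (J.filter (fun v => v.1 = 1 ∧ p v.2)).card := by
  apply Finset.card_bij' (i := fun w _ => (w.1 + 1, w.2)) (j := fun v _ => (v.1 - 1, v.2))
  · intro w _
    exact Prod.ext_iff.mpr ⟨by simp, rfl⟩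
  · intro v hv
    simp only [Finset.mem_filter] at hv
    exact Prod.ext_iff.mpr ⟨by simp; omega, rfl⟩
  · intro w hw
    simp only [Finset.mem_filter, mem_shf] at hw ⊢
    obtain ⟨hwJ, h0, hp⟩ := hw
    exact ⟨hwJ, by omega, hp⟩
  · intro v hv
    simp only [Finset.mem_filter, mem_shf] at hv ⊢
    obtain ⟨hvJ, h1, hp⟩ := hv
    have h2 : (v.1 - 1 + 1, v.2) = v := Prod.ext_iff.mpr ⟨by simp; omega, rfl⟩
    exact ⟨by rw [h2]; exact hvJ, by omega, hp⟩

lemma tworow (p : ℕ → Prop) [DecidablePred p] {F J : Finset (ℕ × ℕ)}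
    (hY : Young F) (hJF : J ⊆ F) (hInd : GridIndep J) :
    (J.filter (fun v => v.1 = 0 ∧ p v.2)).card + (J.filter (fun v => v.1 = 1 ∧ p v.2)).card
      ≤ (F.filter (fun v => v.1 = 0 ∧ p v.2)).card := by
  rw [← Finset.card_union_of_disjoint (by
    rw [Finset.disjoint_filter]
    rintro v _ ⟨h0, -⟩ ⟨h1, -⟩
    omega)]
  apply Finset.card_le_card_of_injOn (fun v => (0, v.2))
  · intro v hv
    simp only [Finset.coe_union, Finset.coe_filter, Set.mem_union, Set.mem_setOf_eq, Finset.mem_coe, Finset.mem_union, Finset.mem_filter] at hv ⊢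
    rcases hv with ⟨hvJ, h0, hp⟩ | ⟨hvJ, h1, hp⟩
    · have he : (0, v.2) = v := Prod.ext_iff.mpr ⟨h0.symm, rfl⟩
      exact ⟨by rw [he]; exact hJF hvJ, trivial, hp⟩
    · have he : (1, v.2) = v := Prod.ext_iff.mpr ⟨h1.symm, rfl⟩
      have := (hY 1 v.2 (by rw [he]; exact hJF hvJ)).1 (le_refl 1)
      exact ⟨by simpa using this, trivial, hp⟩
  · intro u hu v hv heq
    simp only [Finset.coe_union, Set.mem_union, Finset.coe_filter, Set.mem_setOf_eq] at hu hv
    have h2 : u.2 = v.2 := (Prod.ext_iff.mp heq).2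
    have huJ : u ∈ J := by rcases hu with ⟨h, -⟩ | ⟨h, -⟩ <;> exact h
    have hvJ : v ∈ J := by rcases hv with ⟨h, -⟩ | ⟨h, -⟩ <;> exact h
    have hu1 : u.1 = 0 ∨ u.1 = 1 := by rcases hu with ⟨-, h, -⟩ | ⟨-, h, -⟩ <;> omega
    have hv1 : v.1 = 0 ∨ v.1 = 1 := by rcases hv with ⟨-, h, -⟩ | ⟨-, h, -⟩ <;> omega
    by_cases h1 : u.1 = v.1
    · exact Prod.ext_iff.mpr ⟨h1, h2⟩
    · exfalso
      rcases hu1 with h | h <;> rcases hv1 with h' | h'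
      · omega
      · have hadj : gridGraph.Adj u v := by
          rw [adj_iff]; omega
        exact hInd u huJ v hvJ hadj
      · have hadj : gridGraph.Adj u v := by
          rw [adj_iff]; omega
        exact hInd u huJ v hvJ hadj
      · omega

lemma toRow0 {F : Finset (ℕ × ℕ)} (hY : Young F) :
    ∀ x y : ℕ, (x, y) ∈ F → (0, y) ∈ F := by
  intro x
  induction x with
  | zero => intro y h; exact h
  | succ k ih =>
    intro y h
    have := (hY (k + 1) y h).1 (by omega)
    simpa using ih y (by simpa using this)

lemma rowDown {F : Finset (ℕ × ℕ)} (hY : Young F) :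
    ∀ b a : ℕ, (0, b) ∈ F → a ≤ b → (0, a) ∈ F := by
  intro b
  induction b with
  | zero => intro a h ha; simpa [Nat.le_zero.mp ha] using h
  | succ k ih =>
    intro a h ha
    rcases Nat.lt_or_ge a (k + 1) with h' | h'
    · have := (hY 0 (k + 1) h).2 (by omega)
      simpa using ih a (by simpa using this) (by omega)
    · have : a = k + 1 := by omega
      rwa [this]

lemma oC_le_eC {F : Finset (ℕ × ℕ)} (hY : Young F) : oC F ≤ eC F := by
  apply Finset.card_le_card_of_injOn (fun v => (0, v.2 - 1))
  · intro v hv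
    simp only [Finset.coe_filter, Set.mem_setOf_eq, Finset.mem_coe, Finset.mem_filter] at hv ⊢
    obtain ⟨hvF, h0, ho⟩ := hv
    have h1 : 1 ≤ v.2 := by rcases ho with ⟨m, hm⟩; omega
    have hvF' : (0, v.2) ∈ F := by
      have he : (0, v.2) = v := Prod.ext_iff.mpr ⟨h0.symm, rfl⟩
      rw [he]; exact hvF
    refine ⟨rowDown hY v.2 (v.2 - 1) hvF' (by omega), trivial, ?_⟩
    show Even (v.2 - 1)
    rw [Nat.odd_iff] at ho
    rw [Nat.even_iff]
    omega
  · intro u hu v hv heq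
    simp only [Finset.coe_filter, Set.mem_setOf_eq] at hu hv
    obtain ⟨-, hu0, huo⟩ := hu
    obtain ⟨-, hv0, hvo⟩ := hv
    have h2 : u.2 - 1 = v.2 - 1 := (Prod.ext_iff.mp heq).2
    rw [Nat.odd_iff] at huo hvo
    apply Prod.ext_iff.mpr
    constructor
    · omega
    · omega

lemma rowcap {F J : Finset (ℕ × ℕ)} (hY : Young F) (hJF : J ⊆ F) (hInd : GridIndep J)
    {y₀ : ℕ} (hy₀J : (0, y₀) ∈ J) (hy₀o : Odd y₀) :
    (J.filter (fun v => v.1 = 0)).card ≤ oC F := by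
  have hcons : ∀ y : ℕ, (0, y) ∈ J → (0, y + 1) ∈ J → False := by
    intro y h1 h2
    exact hInd _ h1 _ h2 (adj_vert 0 y)
  have hy₀F : (0, y₀) ∈ F := hJF hy₀J
  have hy₀m : y₀ % 2 = 1 := Nat.odd_iff.mp hy₀o
  apply Finset.card_le_card_of_injOn
    (fun v => (0, if Odd v.2 then v.2 else if v.2 < y₀ then v.2 + 1 else v.2 - 1))
  · intro v hv
    simp only [Finset.coe_filter, Set.mem_setOf_eq, Finset.mem_coe, Finset.mem_filter] at hv ⊢
    obtain ⟨hvJ, h0⟩ := hv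
    have hvF : (0, v.2) ∈ F := by
      have he : (0, v.2) = v := Prod.ext_iff.mpr ⟨h0.symm, rfl⟩
      rw [he]; exact hJF hvJ
    by_cases ho : Odd v.2
    · simp only [ho, if_true]
      exact ⟨hvF, trivial, trivial⟩
    · have hem : v.2 % 2 = 0 := by rw [Nat.odd_iff] at ho; omega
      by_cases hlt : v.2 < y₀
      · simp only [ho, if_false, hlt, if_true]
        refine ⟨rowDown hY y₀ (v.2 + 1) hy₀F (by omega), trivial, ?_⟩
        rw [Nat.odd_iff]; omega
      · simp only [ho, if_false, hlt]
        refine ⟨rowDown hY v.2 (v.2 - 1) hvF (by omega), trivial, ?_⟩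
        rw [Nat.odd_iff]; omega
  · intro u hu v hv heq
    simp only [Finset.coe_filter, Set.mem_setOf_eq] at hu hv
    obtain ⟨huJ, hu0⟩ := hu
    obtain ⟨hvJ, hv0⟩ := hv
    have huJ' : (0, u.2) ∈ J := by
      have he : (0, u.2) = u := Prod.ext_iff.mpr ⟨hu0.symm, rfl⟩
      rw [he]; exact huJ
    have hvJ' : (0, v.2) ∈ J := by
      have he : (0, v.2) = v := Prod.ext_iff.mpr ⟨hv0.symm, rfl⟩
      rw [he]; exact hvJ
    have hsnd := (Prod.ext_iff.mp heq).2
    simp only at hsnd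
    have goal22 : u.2 = v.2 := by
      by_cases hA : Odd u.2
      · rw [if_pos hA] at hsnd
        by_cases hB : Odd v.2
        · rwa [if_pos hB] at hsnd
        · rw [if_neg hB] at hsnd
          have hbm : v.2 % 2 = 0 := by rw [Nat.odd_iff] at hB; omega
          by_cases hltv : v.2 < y₀
          · rw [if_pos hltv] at hsnd
            exact absurd (hcons v.2 hvJ' (by rw [← hsnd]; exact huJ')) (by simp)
          · rw [if_neg hltv] at hsnd
            refine absurd (hcons u.2 huJ' ?_) (by simp)
            rw [show u.2 + 1 = v.2 by omega]
            exact hvJ'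
      · rw [if_neg hA] at hsnd
        have ham : u.2 % 2 = 0 := by rw [Nat.odd_iff] at hA; omega
        by_cases hB : Odd v.2
        · rw [if_pos hB] at hsnd
          have hbm : v.2 % 2 = 1 := Nat.odd_iff.mp hB
          by_cases hltu : u.2 < y₀
          · rw [if_pos hltu] at hsnd
            exact absurd (hcons u.2 huJ' (by rw [hsnd]; exact hvJ')) (by simp)
          · rw [if_neg hltu] at hsnd
            refine absurd (hcons v.2 hvJ' ?_) (by simp)
            rw [show v.2 + 1 = u.2 by omega]
            exact huJ'
        · rw [if_neg hB] at hsnd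
          have hbm : v.2 % 2 = 0 := by rw [Nat.odd_iff] at hB; omega
          by_cases hltu : u.2 < y₀ <;> by_cases hltv : v.2 < y₀
          · rw [if_pos hltu, if_pos hltv] at hsnd; omega
          · rw [if_pos hltu, if_neg hltv] at hsnd
            refine absurd (hcons u.2 huJ' ?_) (by simp)
            rw [show u.2 + 1 = y₀ by omega]
            exact hy₀J
          · rw [if_neg hltu, if_pos hltv] at hsnd
            refine absurd (hcons v.2 hvJ' ?_) (by simp)
            rw [show v.2 + 1 = y₀ by omega]
            exact hy₀J
          · rw [if_neg hltu, if_neg hltv] at hsnd; omega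
    exact Prod.ext_iff.mpr ⟨by omega, goal22⟩

lemma key : ∀ (n : ℕ) (F : Finset (ℕ × ℕ)), F.card ≤ n → Young F →
    (∀ J, J ⊆ F → GridIndep J → J.card ≤ Ec F + oC J) ∧
    (∀ J, J ⊆ F → GridIndep J → J.card ≤ Oc F + eC J) ∧
    (∀ J, J ⊆ F → GridIndep J → J.card ≤ max (Oc F) (Ec F)) := by
  intro n
  induction n with
  | zero =>
    intro F hc _
    have hF : F = ∅ := Finset.card_eq_zero.mp (by omega)
    subst hF
    refine ⟨?_, ?_, ?_⟩ <;>
    · intro J hJ _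
      rw [Finset.subset_empty.mp hJ]
      simp
  | succ n ih =>
    intro F hc hY
    rcases Finset.eq_empty_or_nonempty F with hF | ⟨⟨x₀, yy⟩, hx⟩
    · subst hF
      refine ⟨?_, ?_, ?_⟩ <;>
      · intro J hJ _
        rw [Finset.subset_empty.mp hJ]
        simp
    · have hrow : (0, yy) ∈ F := toRow0 hY x₀ yy hx
      have hcard1 : 1 ≤ (F.filter (fun v => v.1 = 0)).card :=
        Finset.card_pos.mpr ⟨(0, yy), Finset.mem_filter.mpr ⟨hrow, rfl⟩⟩
      have hsplitF := split_card F
      obtain ⟨ihN, ihM, ihA⟩ := ih (shf F) (by omega) (young_shf hY)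
      have hN : ∀ J, J ⊆ F → GridIndep J → J.card ≤ Ec F + oC J := by
        intro J hJF hInd
        have h1 := ihM (shf J) (shf_subset hJF) (indep_shf hInd)
        have h2 := shf_row0_card (fun m => Even m) J
        have h3 := tworow (fun m => Even m) hY hJF hInd
        have h4 := ec_identity F
        have h5 := split_card J
        have h6 := row0_parity_split J
        simp only [eC, oC, Ec, Oc] at *
        omega
      have hM : ∀ J, J ⊆ F → GridIndep J → J.card ≤ Oc F + eC J := by
        intro J hJF hInd
        have h1 := ihN (shf J) (shf_subset hJF) (indep_shf hInd)
        have h2 := shf_row0_card (fun m => Odd m) J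
        have h3 := tworow (fun m => Odd m) hY hJF hInd
        have h4 := oc_identity F
        have h5 := split_card J
        have h6 := row0_parity_split J
        simp only [eC, oC, Ec, Oc] at *
        omega
      refine ⟨hN, hM, ?_⟩
      intro J hJF hInd
      by_cases hone : (J.filter (fun v => v.1 = 0 ∧ Odd v.2)).Nonempty
      · obtain ⟨w, hw⟩ := hone
        rw [Finset.mem_filter] at hw
        obtain ⟨hwJ, hw0, hwo⟩ := hw
        have hwJ' : (0, w.2) ∈ J := by
          have he : (0, w.2) = w := Prod.ext_iff.mpr ⟨hw0.symm, rfl⟩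
          rw [he]; exact hwJ
        have hcap := rowcap hY hJF hInd hwJ' hwo
        have h5 := ihA (shf J) (shf_subset hJF) (indep_shf hInd)
        have h6 := oC_le_eC hY
        have h4e := ec_identity F
        have h4o := oc_identity F
        have hsJ := split_card J
        simp only [eC, oC, Ec, Oc] at *
        omega
      · have hzero : oC J = 0 := by
          rw [Finset.not_nonempty_iff_eq_empty] at hone
          simp only [oC, hone, Finset.card_empty]
        have := hN J hJF hInd
        rw [hzero] at this
        omega

lemma color_indep_odd (F : Finset (ℕ × ℕ)) :
    GridIndep (F.filter (fun v => Odd (v.1 + v.2))) := by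
  intro v hv w hw hadj
  rw [Finset.mem_filter] at hv hw
  have h1 := Nat.odd_iff.mp hv.2
  have h2 := Nat.odd_iff.mp hw.2
  exact adj_parity hadj (by omega)

lemma color_indep_even (F : Finset (ℕ × ℕ)) :
    GridIndep (F.filter (fun v => Even (v.1 + v.2))) := by
  intro v hv w hw hadj
  rw [Finset.mem_filter] at hv hw
  have h1 := Nat.even_iff.mp hv.2
  have h2 := Nat.even_iff.mp hw.2
  exact adj_parity hadj (by omega)

theorem stmt10 (F : Finset (ℕ × ℕ))
    (hF : ∀ x y : ℕ, (x, y) ∈ F →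
      (1 ≤ x → (x - 1, y) ∈ F) ∧ (1 ≤ y → (x, y - 1) ∈ F)) :
    (GridIndep (F.filter (fun v => Odd (v.1 + v.2))) ∧
      ∀ I : Finset (ℕ × ℕ), I ⊆ F → GridIndep I →
        I.card ≤ (F.filter (fun v => Odd (v.1 + v.2))).card) ∨
    (GridIndep (F.filter (fun v => Even (v.1 + v.2))) ∧
      ∀ I : Finset (ℕ × ℕ), I ⊆ F → GridIndep I →
        I.card ≤ (F.filter (fun v => Even (v.1 + v.2))).card) := by
  have hY : Young F := hF
  obtain ⟨-, -, hA⟩ := key F.card F le_rfl hY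
  rcases le_total (Ec F) (Oc F) with h | h
  · left
    refine ⟨color_indep_odd F, fun I hIF hI => ?_⟩
    have := hA I hIF hI
    rw [max_eq_left h] at this
    exact this
  · right
    refine ⟨color_indep_even F, fun I hIF hI => ?_⟩
    have := hA I hIF hI
    rw [max_eq_right h] at this
    exact this
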